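/- For any two distributions F and G and any p ∈ ℕ: Shift_±^{WD_p}(F,G) > 0 if and only if Shift_±^{AVM}(F,G) > 0, and Shift_±^{AVM}(F,G) > 0 implies Shift_±^{CD}(F,G) > 0. The converse of the last implication fails in general. -/

import Mathlib

open MeasureTheory Set Filter
open scoped ENNReal

/-- Signed `p`-th power `z^{[p]} = sgn(z)·|z|^p`. -/
noncomputable def sgnPow (p : ℕ) (z : ℝ) : ℝ := Real.sign z * |z| ^ p

/-- `Shift₊^{WD_p}` component, as a lower Lebesgue integral. -/
noncomputable def wdShiftPlusL (p : ℕ) (qF qG : ℝ → ℝ) : ℝ≥0∞ :=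
  ∫⁻ α in Set.Ioo (0:ℝ) 1,
    ENNReal.ofReal (max (min (sgnPow p (qF ((1 + α) / 2) - qG ((1 + α) / 2)))
                             (sgnPow p (qF ((1 - α) / 2) - qG ((1 - α) / 2)))) 0)

/-- `Shift₊^{CD}` component, as a lower Lebesgue integral. -/
noncomputable def cdShiftPlusL (qF qG : ℝ → ℝ) : ℝ≥0∞ :=
  (1 / 2 : ℝ≥0∞) * ∫⁻ β in Set.Ioo (0:ℝ) 1, ∫⁻ α in Set.Ioo (0:ℝ) 1,
    (ENNReal.ofReal (max (min (qF ((1 + α) / 2) - qG ((1 + β) / 2))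
                              (qF ((1 - α) / 2) - qG ((1 - β) / 2))) 0) +
     ENNReal.ofReal (max (qF ((1 - α) / 2) - qG ((1 + β) / 2)) 0))

/-- Monotone, left-continuous quantile function on `(0,1)`. -/
def IsQuantile (q : ℝ → ℝ) : Prop :=
  MonotoneOn q (Set.Ioo 0 1) ∧
    ∀ τ ∈ Set.Ioo (0:ℝ) 1,
      Filter.Tendsto q (nhdsWithin τ (Set.Iio τ)) (nhds (q τ))

lemma sgnPow_pos_iff {p : ℕ} {z : ℝ} : 0 < sgnPow p z ↔ 0 < z := by
  rcases lt_trichotomy z 0 with h | h | h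
  · have hp : (0:ℝ) < |z| ^ p := pow_pos (abs_pos.mpr h.ne) p
    have : sgnPow p z < 0 := by
      simp only [sgnPow, Real.sign_of_neg h]; nlinarith
    constructor <;> intro h' <;> linarith
  · simp [h, sgnPow, Real.sign_zero]
  · have hp : (0:ℝ) < |z| ^ p := pow_pos (abs_pos.mpr h.ne') p
    have : 0 < sgnPow p z := by
      simp only [sgnPow, Real.sign_of_pos h]; nlinarith
    exact ⟨fun _ => h, fun _ => this⟩

lemma measurable_sgnPow (p : ℕ) : Measurable (sgnPow p) := by
  have hs : Measurable Real.sign := by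
    have h : Real.sign = fun r : ℝ => if r < 0 then (-1:ℝ) else if 0 < r then 1 else 0 := by
      funext r; rfl
    rw [h]
    exact Measurable.ite (measurableSet_lt measurable_id measurable_const)
      measurable_const
      (Measurable.ite (measurableSet_lt measurable_const measurable_id)
        measurable_const measurable_const)
  exact hs.mul ((measurable_abs).pow_const p)

lemma exists_right_acc {S : Set ℝ} (h : volume S ≠ 0) :
    ∃ x ∈ S, ∀ δ > (0:ℝ), ∃ y ∈ S, x < y ∧ y < x + δ := by
  by_contra hc
  push_neg at hc
  apply h
  have hcnt : S.Countable := by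
    choose! δ hδpos hδ using hc
    have hq : ∀ x ∈ S, ∃ q : ℚ, x < (q:ℝ) ∧ (q:ℝ) < x + δ x := by
      intro x hx
      exact exists_rat_btwn (by linarith [hδpos x hx])
    choose! r hr1 hr2 using hq
    rw [Set.countable_iff_exists_injOn]
    refine ⟨fun x => Encodable.encode (r x), ?_⟩
    intro a ha b hb hab
    have hab' : r a = r b := Encodable.encode_injective hab
    by_contra hne
    rcases lt_or_gt_of_ne hne with hlt | hlt
    · have h1 := hδ a ha b hb hlt
      have h2 := hr2 a ha
      have h3 := hr1 b hb
      rw [hab'] at h2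
      linarith
    · have h1 := hδ b hb a ha hlt
      have h2 := hr2 b hb
      have h3 := hr1 a ha
      rw [hab'] at h3
      linarith
  exact hcnt.measure_zero volume

def posSet (qF qG : ℝ → ℝ) : Set ℝ :=
  {α | 0 < qF ((1 + α) / 2) - qG ((1 + α) / 2) ∧
       0 < qF ((1 - α) / 2) - qG ((1 - α) / 2)} ∩ Set.Ioo 0 1

lemma upper_mem {α : ℝ} (h : α ∈ Set.Ioo (0:ℝ) 1) : (1 + α) / 2 ∈ Set.Ioo (0:ℝ) 1 :=
  ⟨by linarith [h.1], by linarith [h.2]⟩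

lemma lower_mem {α : ℝ} (h : α ∈ Set.Ioo (0:ℝ) 1) : (1 - α) / 2 ∈ Set.Ioo (0:ℝ) 1 :=
  ⟨by linarith [h.2], by linarith [h.1]⟩

lemma aemeas_upper {q : ℝ → ℝ} (hq : IsQuantile q) :
    AEMeasurable (fun α => q ((1 + α) / 2)) (volume.restrict (Set.Ioo (0:ℝ) 1)) := by
  apply aemeasurable_restrict_of_monotoneOn measurableSet_Ioo
  intro a ha b hb hab
  exact hq.1 (upper_mem ha) (upper_mem hb) (by linarith)

lemma aemeas_lower {q : ℝ → ℝ} (hq : IsQuantile q) :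
    AEMeasurable (fun α => q ((1 - α) / 2)) (volume.restrict (Set.Ioo (0:ℝ) 1)) := by
  apply aemeasurable_restrict_of_antitoneOn measurableSet_Ioo
  intro a ha b hb hab
  exact hq.1 (lower_mem hb) (lower_mem ha) (by linarith)

lemma wd_pos_iff (qF qG : ℝ → ℝ) (hF : IsQuantile qF) (hG : IsQuantile qG) (p : ℕ) :
    0 < wdShiftPlusL p qF qG ↔ volume (posSet qF qG) ≠ 0 := by
  set f : ℝ → ℝ≥0∞ := fun α =>
    ENNReal.ofReal (max (min (sgnPow p (qF ((1 + α) / 2) - qG ((1 + α) / 2)))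
                             (sgnPow p (qF ((1 - α) / 2) - qG ((1 - α) / 2)))) 0) with hfdef
  have hfm : AEMeasurable f (volume.restrict (Set.Ioo (0:ℝ) 1)) := by
    apply ENNReal.measurable_ofReal.comp_aemeasurable
    apply AEMeasurable.max _ aemeasurable_const
    exact AEMeasurable.min
      ((measurable_sgnPow p).comp_aemeasurable ((aemeas_upper hF).sub (aemeas_upper hG)))
      ((measurable_sgnPow p).comp_aemeasurable ((aemeas_lower hF).sub (aemeas_lower hG)))
  have hset : {α | f α ≠ 0} = {α | 0 < qF ((1 + α) / 2) - qG ((1 + α) / 2) ∧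
       0 < qF ((1 - α) / 2) - qG ((1 - α) / 2)} := by
    ext α
    simp only [hfdef, Set.mem_setOf_eq, ne_eq, ENNReal.ofReal_eq_zero, not_le, lt_max_iff,
      lt_irrefl, or_false, lt_min_iff, sgnPow_pos_iff]
  have : (0 < wdShiftPlusL p qF qG) ↔ wdShiftPlusL p qF qG ≠ 0 := pos_iff_ne_zero
  rw [this]
  unfold wdShiftPlusL
  rw [Ne, lintegral_eq_zero_iff' hfm]
  rw [Filter.EventuallyEq, ae_iff]
  rw [Measure.restrict_apply' measurableSet_Ioo]
  simp only [Pi.zero_apply]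
  constructor
  · intro h h'
    apply h
    rw [show {a | ¬ f a = 0} ∩ Set.Ioo 0 1 = posSet qF qG by rw [posSet, ← hset]]
    exact h'
  · intro h h'
    apply h
    rw [show {a | ¬ f a = 0} ∩ Set.Ioo 0 1 = posSet qF qG by rw [posSet, ← hset]] at h'
    exact h'

lemma cd_pos (qF qG : ℝ → ℝ) (hF : IsQuantile qF) (hG : IsQuantile qG)
    (h : volume (posSet qF qG) ≠ 0) : 0 < cdShiftPlusL qF qG := by
  obtain ⟨x, hxS, hacc⟩ := exists_right_acc h
  obtain ⟨⟨hax, hbx⟩, hxI⟩ := hxS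
  obtain ⟨τ₀, hτ₀def⟩ : ∃ v : ℝ, v = (1 - x) / 2 := ⟨_, rfl⟩
  have hτ₀I : τ₀ ∈ Set.Ioo (0:ℝ) 1 := hτ₀def ▸ lower_mem hxI
  obtain ⟨ε, hεdef⟩ : ∃ v : ℝ, v = qF ((1 - x) / 2) - qG ((1 - x) / 2) := ⟨_, rfl⟩
  have hεpos : 0 < ε := hεdef ▸ hbx
  have hev : ∀ᶠ τ in nhdsWithin τ₀ (Set.Iio τ₀), qF τ₀ - ε / 2 < qF τ :=
    (hF.2 τ₀ hτ₀I).eventually (eventually_gt_nhds (sub_lt_self _ (half_pos hεpos)))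
  obtain ⟨a', ha'lt, ha'sub⟩ := mem_nhdsLT_iff_exists_Ioo_subset.1 hev
  have ha'lt' : a' < τ₀ := ha'lt
  obtain ⟨x', hx'def⟩ : ∃ v : ℝ, v = 1 - 2 * a' := ⟨_, rfl⟩
  have hxx' : x < x' := by rw [hx'def]; rw [hτ₀def] at ha'lt'; linarith
  obtain ⟨y, hyS, hxy, hyx'⟩ := hacc (x' - x) (by linarith)
  obtain ⟨⟨hay, hby⟩, hyI⟩ := hyS
  obtain ⟨ε', hε'def⟩ : ∃ v : ℝ, v = qF ((1 + y) / 2) - qG ((1 + y) / 2) := ⟨_, rfl⟩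
  have hε'pos : 0 < ε' := hε'def ▸ hay
  have hyx'' : y < x' := by linarith
  obtain ⟨z, hzdef⟩ : ∃ v : ℝ, v = min x' 1 := ⟨_, rfl⟩
  have hyz : y < z := hzdef ▸ lt_min hyx'' hyI.2
  obtain ⟨c, hcdef⟩ : ∃ v : ℝ≥0∞, v = ENNReal.ofReal (min ε' (ε / 2)) := ⟨_, rfl⟩
  have hcne : c ≠ 0 := by
    simp only [hcdef, ne_eq, ENNReal.ofReal_eq_zero, not_le]
    exact lt_min hε'pos (half_pos hεpos)
  set F : ℝ → ℝ → ℝ≥0∞ := fun β α =>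
    ENNReal.ofReal (max (min (qF ((1 + α) / 2) - qG ((1 + β) / 2))
                              (qF ((1 - α) / 2) - qG ((1 - β) / 2))) 0) +
     ENNReal.ofReal (max (qF ((1 - α) / 2) - qG ((1 + β) / 2)) 0) with hFdef
  have key : ∀ β ∈ Set.Ioo x y, ∀ α ∈ Set.Ioo y z, c ≤ F β α := by
    intro β hβ α hα
    have hαI : α ∈ Set.Ioo (0:ℝ) 1 :=
      ⟨by linarith [hα.1, hxI.1], lt_of_lt_of_le hα.2 (hzdef ▸ min_le_right x' 1)⟩
    have hβI : β ∈ Set.Ioo (0:ℝ) 1 := ⟨by linarith [hβ.1, hxI.1], by linarith [hβ.2, hyI.2]⟩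
    have hT1 : ε' ≤ qF ((1 + α) / 2) - qG ((1 + β) / 2) := by
      have h1 : qF ((1 + y) / 2) ≤ qF ((1 + α) / 2) :=
        hF.1 (upper_mem hyI) (upper_mem hαI) (by linarith [hα.1])
      have h2 : qG ((1 + β) / 2) ≤ qG ((1 + y) / 2) :=
        hG.1 (upper_mem hβI) (upper_mem hyI) (by linarith [hβ.2])
      simp only [hε'def]; linarith
    have hT2 : ε / 2 ≤ qF ((1 - α) / 2) - qG ((1 - β) / 2) := by
      have hαz : α < x' := lt_of_lt_of_le hα.2 (hzdef ▸ min_le_left x' 1)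
      have hmem : (1 - α) / 2 ∈ Set.Ioo a' τ₀ := by
        constructor
        · simp only [hx'def] at hαz; linarith
        · simp only [hτ₀def]; linarith [hα.1]
      have h1 : qF τ₀ - ε / 2 < qF ((1 - α) / 2) := ha'sub hmem
      have h2 : qG ((1 - β) / 2) ≤ qG ((1 - x) / 2) :=
        hG.1 (lower_mem hβI) (lower_mem hxI) (by linarith [hβ.1])
      simp only [hτ₀def] at h1
      simp only [hεdef] at *
      linarith
    calc c ≤ ENNReal.ofReal (max (min (qF ((1 + α) / 2) - qG ((1 + β) / 2))
                              (qF ((1 - α) / 2) - qG ((1 - β) / 2))) 0) := by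
            rw [hcdef]
            apply ENNReal.ofReal_le_ofReal
            exact le_trans (le_trans (min_le_min hT1 hT2) le_rfl) (le_max_left _ _)
      _ ≤ F β α := le_self_add
  unfold cdShiftPlusL
  apply ENNReal.mul_pos (by norm_num)
  have hInner : ∀ β ∈ Set.Ioo x y,
      c * volume (Set.Ioo y z) ≤ ∫⁻ α in Set.Ioo (0:ℝ) 1, F β α := by
    intro β hβ
    calc c * volume (Set.Ioo y z) = ∫⁻ _ in Set.Ioo y z, c := (setLIntegral_const _ _).symm
      _ ≤ ∫⁻ α in Set.Ioo y z, F β α :=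
          setLIntegral_mono' measurableSet_Ioo (fun α hα => key β hβ α hα)
      _ ≤ ∫⁻ α in Set.Ioo (0:ℝ) 1, F β α :=
          lintegral_mono_set (Set.Ioo_subset_Ioo (le_of_lt hyI.1) (hzdef ▸ min_le_right x' 1))
  have hmain : c * volume (Set.Ioo y z) * volume (Set.Ioo x y) ≤
      ∫⁻ β in Set.Ioo (0:ℝ) 1, ∫⁻ α in Set.Ioo (0:ℝ) 1, F β α := by
    calc c * volume (Set.Ioo y z) * volume (Set.Ioo x y)
        = ∫⁻ _ in Set.Ioo x y, c * volume (Set.Ioo y z) := (setLIntegral_const _ _).symm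
      _ ≤ ∫⁻ β in Set.Ioo x y, ∫⁻ α in Set.Ioo (0:ℝ) 1, F β α :=
          setLIntegral_mono' measurableSet_Ioo hInner
      _ ≤ _ := lintegral_mono_set (Set.Ioo_subset_Ioo (le_of_lt hxI.1) (le_of_lt hyI.2))
  have hpos : (0:ℝ≥0∞) < c * volume (Set.Ioo y z) * volume (Set.Ioo x y) := by
    apply ENNReal.mul_pos (ENNReal.mul_pos hcne ?_).ne' ?_
    · rw [Real.volume_Ioo]
      simp only [ne_eq, ENNReal.ofReal_eq_zero, not_le]
      linarith
    · rw [Real.volume_Ioo]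
      simp only [ne_eq, ENNReal.ofReal_eq_zero, not_le]
      linarith
  exact (lt_of_lt_of_le hpos hmain).ne'

/-- step quantile: `τ` below the median, `v` above. -/
noncomputable def stepQ (v : ℝ) : ℝ → ℝ := fun τ => if τ ≤ 1/2 then τ else v

lemma isQuantile_stepQ {v : ℝ} (hv : 1/2 ≤ v) : IsQuantile (stepQ v) := by
  constructor
  · intro a _ b _ hab
    unfold stepQ
    split_ifs with h1 h2 h2
    · exact hab
    · linarith
    · linarith
    · exact le_refl v
  · intro τ hτ
    by_cases hle : τ ≤ 1/2
    · have hev : ∀ᶠ s in nhdsWithin τ (Set.Iio τ), s = stepQ v s := by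
        filter_upwards [self_mem_nhdsWithin] with s hs
        have hs' : s ≤ 1/2 := by
          have : s < τ := hs
          linarith
        simp only [stepQ, if_pos hs']
      have hval : stepQ v τ = τ := by simp only [stepQ, if_pos hle]
      rw [hval]
      exact Filter.Tendsto.congr' hev (tendsto_id.mono_left nhdsWithin_le_nhds)
    · push_neg at hle
      have hev : ∀ᶠ s in nhdsWithin τ (Set.Iio τ), stepQ v τ = stepQ v s := by
        filter_upwards [Ioo_mem_nhdsLT_of_mem (⟨hle, le_refl τ⟩ : τ ∈ Set.Ioc (1/2) τ)]
          with s hs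
        simp only [stepQ, if_neg (not_le.mpr hs.1), if_neg (not_le.mpr hle)]
      exact Filter.Tendsto.congr' hev tendsto_const_nhds

lemma wd_stepQ_zero : wdShiftPlusL 1 (stepQ 1) (stepQ (1/2)) = 0 := by
  unfold wdShiftPlusL
  rw [setLIntegral_congr_fun_ae measurableSet_Ioo
    (ae_of_all _ (fun α (hα : α ∈ Set.Ioo (0:ℝ) 1) => ?_)), lintegral_zero]
  have hlow : (1 - α) / 2 ≤ 1/2 := by linarith [hα.1]
  have hz : stepQ 1 ((1 - α) / 2) - stepQ (1/2) ((1 - α) / 2) = 0 := by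
    simp only [stepQ, if_pos hlow]; ring
  rw [hz]
  have : sgnPow 1 (0:ℝ) = 0 := by simp [sgnPow]
  rw [this]
  rw [max_eq_right (min_le_right _ _), ENNReal.ofReal_zero]

lemma cd_stepQ_pos : 0 < cdShiftPlusL (stepQ 1) (stepQ (1/2)) := by
  unfold cdShiftPlusL
  apply ENNReal.mul_pos (by norm_num)
  have key : ∀ β ∈ Set.Ioo (1/2:ℝ) 1, ∀ α ∈ Set.Ioo (0:ℝ) (1/4),
      ENNReal.ofReal (1/8 : ℝ) ≤
      (ENNReal.ofReal (max (min (stepQ 1 ((1 + α) / 2) - stepQ (1/2) ((1 + β) / 2))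
            (stepQ 1 ((1 - α) / 2) - stepQ (1/2) ((1 - β) / 2))) 0) +
       ENNReal.ofReal (max (stepQ 1 ((1 - α) / 2) - stepQ (1/2) ((1 + β) / 2)) 0)) := by
    intro β hβ α hα
    have h1 : ¬ (1 + α) / 2 ≤ 1/2 := by push_neg; linarith [hα.1]
    have h2 : ¬ (1 + β) / 2 ≤ 1/2 := by push_neg; linarith [hβ.1]
    have h3 : (1 - α) / 2 ≤ 1/2 := by linarith [hα.1]
    have h4 : (1 - β) / 2 ≤ 1/2 := by linarith [hβ.1]
    have e1 : stepQ 1 ((1 + α) / 2) - stepQ (1/2) ((1 + β) / 2) = 1/2 := by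
      simp only [stepQ, if_neg h1, if_neg h2]; ring
    have e2 : stepQ 1 ((1 - α) / 2) - stepQ (1/2) ((1 - β) / 2) = (β - α)/2 := by
      simp only [stepQ, if_pos h3, if_pos h4]; ring
    refine le_trans ?_ le_self_add
    apply ENNReal.ofReal_le_ofReal
    rw [e1, e2]
    refine le_trans ?_ (le_max_left _ _)
    apply le_min (by norm_num)
    linarith [hβ.1, hα.2]
  have hmain : ENNReal.ofReal (1/8:ℝ) * volume (Set.Ioo (0:ℝ) (1/4)) * volume (Set.Ioo (1/2:ℝ) 1) ≤
      ∫⁻ β in Set.Ioo (0:ℝ) 1, ∫⁻ α in Set.Ioo (0:ℝ) 1,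
        (ENNReal.ofReal (max (min (stepQ 1 ((1 + α) / 2) - stepQ (1/2) ((1 + β) / 2))
            (stepQ 1 ((1 - α) / 2) - stepQ (1/2) ((1 - β) / 2))) 0) +
         ENNReal.ofReal (max (stepQ 1 ((1 - α) / 2) - stepQ (1/2) ((1 + β) / 2)) 0)) := by
    calc ENNReal.ofReal (1/8:ℝ) * volume (Set.Ioo (0:ℝ) (1/4)) * volume (Set.Ioo (1/2:ℝ) 1)
        = ∫⁻ _ in Set.Ioo (1/2:ℝ) 1, ENNReal.ofReal (1/8:ℝ) * volume (Set.Ioo (0:ℝ) (1/4)) :=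
          (setLIntegral_const _ _).symm
      _ ≤ ∫⁻ β in Set.Ioo (1/2:ℝ) 1, ∫⁻ α in Set.Ioo (0:ℝ) 1, _ := by
          apply setLIntegral_mono' measurableSet_Ioo
          intro β hβ
          calc ENNReal.ofReal (1/8:ℝ) * volume (Set.Ioo (0:ℝ) (1/4))
              = ∫⁻ _ in Set.Ioo (0:ℝ) (1/4), ENNReal.ofReal (1/8:ℝ) :=
                (setLIntegral_const _ _).symm
            _ ≤ ∫⁻ α in Set.Ioo (0:ℝ) (1/4), _ :=
                setLIntegral_mono' measurableSet_Ioo (fun α hα => key β hβ α hα)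
            _ ≤ _ := lintegral_mono_set (Set.Ioo_subset_Ioo le_rfl (by norm_num))
      _ ≤ _ := lintegral_mono_set (Set.Ioo_subset_Ioo (by norm_num) le_rfl)
  refine (lt_of_lt_of_le ?_ hmain).ne'
  rw [Real.volume_Ioo, Real.volume_Ioo]
  apply ENNReal.mul_pos (ENNReal.mul_pos ?_ ?_).ne' ?_ <;>
    · simp only [ne_eq, ENNReal.ofReal_eq_zero, not_le]; norm_num

/-- Positivity of the shift components agrees between `WD_p` and the AVM
(`p = 1`), and positivity for the AVM implies positivity for the Cramér
distance; the converse of this last implication fails in general.  The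
minus components are covered by exchanging `F` and `G`. -/
theorem shift_positivity_agreement :
    (∀ qF qG : ℝ → ℝ, IsQuantile qF → IsQuantile qG → ∀ p : ℕ, 1 ≤ p →
      ((0 < wdShiftPlusL p qF qG ↔ 0 < wdShiftPlusL 1 qF qG) ∧
        (0 < wdShiftPlusL 1 qF qG → 0 < cdShiftPlusL qF qG)) ∧
      ((0 < wdShiftPlusL p qG qF ↔ 0 < wdShiftPlusL 1 qG qF) ∧
        (0 < wdShiftPlusL 1 qG qF → 0 < cdShiftPlusL qG qF))) ∧
    (∃ qF qG : ℝ → ℝ, IsQuantile qF ∧ IsQuantile qG ∧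
      0 < cdShiftPlusL qF qG ∧ ¬ 0 < wdShiftPlusL 1 qF qG) := by
  constructor
  · intro qF qG hF hG p _
    refine ⟨⟨?_, ?_⟩, ⟨?_, ?_⟩⟩
    · rw [wd_pos_iff qF qG hF hG p, wd_pos_iff qF qG hF hG 1]
    · intro h
      exact cd_pos qF qG hF hG ((wd_pos_iff qF qG hF hG 1).mp h)
    · rw [wd_pos_iff qG qF hG hF p, wd_pos_iff qG qF hG hF 1]
    · intro h
      exact cd_pos qG qF hG hF ((wd_pos_iff qG qF hG hF 1).mp h)
  · exact ⟨stepQ 1, stepQ (1/2), isQuantile_stepQ (by norm_num), isQuantile_stepQ le_rfl,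
      cd_stepQ_pos, by rw [wd_stepQ_zero]; exact lt_irrefl 0⟩
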